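/- Let p_1, …, p_n ∈ ℝ² with n ≥ 1 and let y ∈ ℝ. Then the maximum of δ_{p_i p_j}(y) over all backward pairs (i, j) (i.e., pairs with i ≤ j and x_{p_j} ≤ x_{p_i}) equals the maximum of δ'_{p_i p_j}(y) over all pairs (i, j) with i ≤ j: max{ δ_{p_i p_j}(y) : i ≤ j, x_{p_j} ≤ x_{p_i} } = max{ δ'_{p_i p_j}(y) : i ≤ j }. (Both maxima range over nonempty sets since every pair (i, i) is a backward pair.) -/
import Mathlib

open Metric Set

noncomputable section

/-- Points of the Euclidean plane ℝ². -/
abbrev Pt : Type := EuclideanSpace ℝ (Fin 2)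

/-- The point (x, y) ∈ ℝ². -/
def pt (x y : ℝ) : Pt := (WithLp.equiv 2 (Fin 2 → ℝ)).symm ![x, y]

/-- The leftward horizontal halfline ←p = {(x, y_p) : x ≤ x_p}. -/
def leftRay (p : Pt) : Set Pt := {z : Pt | z 1 = p 1 ∧ z 0 ≤ p 0}

/-- The rightward horizontal halfline →p = {(x, y_p) : x ≥ x_p}. -/
def rightRay (p : Pt) : Set Pt := {z : Pt | z 1 = p 1 ∧ p 0 ≤ z 0}

/-- h_{←p}(q): Euclidean distance from q to the leftward halfline at p. -/
def hL (p q : Pt) : ℝ := infDist q (leftRay p)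

/-- h_{→p}(q): Euclidean distance from q to the rightward halfline at p. -/
def hR (p q : Pt) : ℝ := infDist q (rightRay p)

/-- h_{←S}(q) = max_{p ∈ S} h_{←p}(q). -/
def hLS (S : Finset Pt) (hS : S.Nonempty) (q : Pt) : ℝ := S.sup' hS fun p => hL p q

/-- h_{→S}(q) = max_{p ∈ S} h_{→p}(q). -/
def hRS (S : Finset Pt) (hS : S.Nonempty) (q : Pt) : ℝ := S.sup' hS fun p => hR p q

/-- δ_{pq}(y) = inf_x max{‖(x,y) − p‖, ‖(x,y) − q‖}. -/
def delta (p q : Pt) (y : ℝ) : ℝ := ⨅ x : ℝ, max ‖pt x y - p‖ ‖pt x y - q‖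

/-- δ'_{pq}(y) = inf_x max{h_{←q}((x,y)), h_{→p}((x,y))}. -/
def delta' (p q : Pt) (y : ℝ) : ℝ := ⨅ x : ℝ, max (hL q (pt x y)) (hR p (pt x y))

lemma pt0 (x y : ℝ) : pt x y 0 = x := rfl
lemma pt1 (x y : ℝ) : pt x y 1 = y := rfl

lemma dist_pt_eq (z w : Pt) : dist z w = Real.sqrt ((z 0 - w 0)^2 + (z 1 - w 1)^2) := by
  rw [EuclideanSpace.dist_eq, Fin.sum_univ_two]
  simp [Real.dist_eq, sq_abs]

lemma norm_sub_eq_dist (z w : Pt) : ‖z - w‖ = dist z w := (dist_eq_norm z w).symm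

lemma leftRay_nonempty (q : Pt) : (leftRay q).Nonempty := ⟨q, rfl, le_refl _⟩
lemma rightRay_nonempty (q : Pt) : (rightRay q).Nonempty := ⟨q, rfl, le_refl _⟩

lemma le_infDist' {s : Set Pt} (hs : s.Nonempty) {z : Pt} {b : ℝ}
    (h : ∀ w ∈ s, b ≤ dist z w) : b ≤ infDist z s := by
  by_contra hlt
  push_neg at hlt
  obtain ⟨w, hw, hd⟩ := (infDist_lt_iff hs).1 hlt
  exact absurd (h w hw) (not_le.2 hd)

lemma abs_le_dist1 (z w : Pt) : |z 1 - w 1| ≤ dist z w := by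
  rw [dist_pt_eq]
  calc |z 1 - w 1| = Real.sqrt ((z 1 - w 1) ^ 2) := (Real.sqrt_sq_eq_abs _).symm
    _ ≤ _ := Real.sqrt_le_sqrt (by nlinarith [sq_nonneg (z 0 - w 0)])

-- lower bounds on hL / hR
lemma abs_le_hL (q z : Pt) : |z 1 - q 1| ≤ hL q z := by
  apply le_infDist' (leftRay_nonempty q)
  rintro w ⟨h1, _⟩
  rw [← h1]; exact abs_le_dist1 z w

lemma abs_le_hR (p z : Pt) : |z 1 - p 1| ≤ hR p z := by
  apply le_infDist' (rightRay_nonempty p)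
  rintro w ⟨h1, _⟩
  rw [← h1]; exact abs_le_dist1 z w

lemma dist_le_hL (q z : Pt) (h : q 0 ≤ z 0) : dist z q ≤ hL q z := by
  apply le_infDist' (leftRay_nonempty q)
  rintro w ⟨h1, h0⟩
  rw [dist_pt_eq, dist_pt_eq, ← h1]
  exact Real.sqrt_le_sqrt (by nlinarith)

lemma dist_le_hR (p z : Pt) (h : z 0 ≤ p 0) : dist z p ≤ hR p z := by
  apply le_infDist' (rightRay_nonempty p)
  rintro w ⟨h1, h0⟩
  rw [dist_pt_eq, dist_pt_eq, ← h1]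
  exact Real.sqrt_le_sqrt (by nlinarith)

-- upper bounds
lemma hL_le_dist (q z : Pt) : hL q z ≤ dist z q :=
  infDist_le_dist_of_mem ⟨rfl, le_refl _⟩

lemma hR_le_dist (p z : Pt) : hR p z ≤ dist z p :=
  infDist_le_dist_of_mem ⟨rfl, le_refl _⟩

lemma hL_le_abs (q z : Pt) (h : z 0 ≤ q 0) : hL q z ≤ |z 1 - q 1| := by
  have hm : pt (z 0) (q 1) ∈ leftRay q := ⟨rfl, h⟩
  calc hL q z ≤ dist z (pt (z 0) (q 1)) := infDist_le_dist_of_mem hm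
    _ = |z 1 - q 1| := by rw [dist_pt_eq]; simp [pt0, pt1, Real.sqrt_sq_eq_abs]

lemma hR_le_abs (p z : Pt) (h : p 0 ≤ z 0) : hR p z ≤ |z 1 - p 1| := by
  have hm : pt (z 0) (p 1) ∈ rightRay p := ⟨rfl, h⟩
  calc hR p z ≤ dist z (pt (z 0) (p 1)) := infDist_le_dist_of_mem hm
    _ = |z 1 - p 1| := by rw [dist_pt_eq]; simp [pt0, pt1, Real.sqrt_sq_eq_abs]

-- monotonicity of dist to points
lemma dist_pt_anti (x x' y : ℝ) (w : Pt) (h1 : w 0 ≤ x') (h2 : x' ≤ x) :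
    dist (pt x' y) w ≤ dist (pt x y) w := by
  rw [dist_pt_eq, dist_pt_eq]
  exact Real.sqrt_le_sqrt (by simp only [pt0, pt1]; nlinarith)

lemma dist_pt_mono (x x' y : ℝ) (w : Pt) (h1 : x ≤ x') (h2 : x' ≤ w 0) :
    dist (pt x' y) w ≤ dist (pt x y) w := by
  rw [dist_pt_eq, dist_pt_eq]
  exact Real.sqrt_le_sqrt (by simp only [pt0, pt1]; nlinarith)

lemma dist_pt_self (w : Pt) (y : ℝ) : dist (pt (w 0) y) w = |y - w 1| := by
  rw [dist_pt_eq]; simp [pt0, pt1, Real.sqrt_sq_eq_abs]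

-- bddBelow facts
lemma bdd_delta (p q : Pt) (y : ℝ) :
    BddBelow (Set.range fun x : ℝ => max ‖pt x y - p‖ ‖pt x y - q‖) := by
  refine ⟨0, ?_⟩
  rintro r ⟨x, rfl⟩
  exact le_max_of_le_left (norm_nonneg _)

lemma bdd_delta' (p q : Pt) (y : ℝ) :
    BddBelow (Set.range fun x : ℝ => max (hL q (pt x y)) (hR p (pt x y))) := by
  refine ⟨0, ?_⟩
  rintro r ⟨x, rfl⟩
  exact le_max_of_le_left infDist_nonneg

lemma delta_le (p q : Pt) (y x : ℝ) :
    delta p q y ≤ max ‖pt x y - p‖ ‖pt x y - q‖ := ciInf_le (bdd_delta p q y) x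

lemma delta'_le (p q : Pt) (y x : ℝ) :
    delta' p q y ≤ max (hL q (pt x y)) (hR p (pt x y)) := ciInf_le (bdd_delta' p q y) x

lemma delta'_le_delta (p q : Pt) (y : ℝ) : delta' p q y ≤ delta p q y := by
  apply le_ciInf
  intro x
  calc delta' p q y ≤ max (hL q (pt x y)) (hR p (pt x y)) := delta'_le p q y x
    _ ≤ max ‖pt x y - p‖ ‖pt x y - q‖ := by
        rw [norm_sub_eq_dist, norm_sub_eq_dist]
        exact max_le (le_max_of_le_right (hL_le_dist q (pt x y)))
          (le_max_of_le_left (hR_le_dist p (pt x y)))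

lemma delta_eq_delta'_of_backward (p q : Pt) (y : ℝ) (hx : q 0 ≤ p 0) :
    delta p q y = delta' p q y := by
  refine le_antisymm ?_ (delta'_le_delta p q y)
  apply le_ciInf
  intro x
  rcases le_or_gt x (q 0) with h1 | h1
  · calc delta p q y ≤ max ‖pt (q 0) y - p‖ ‖pt (q 0) y - q‖ := delta_le p q y (q 0)
      _ ≤ max (hL q (pt x y)) (hR p (pt x y)) := by
          apply max_le
          · rw [norm_sub_eq_dist]
            refine le_max_of_le_right ?_
            calc dist (pt (q 0) y) p ≤ dist (pt x y) p := dist_pt_mono x (q 0) y p h1 hx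
              _ ≤ hR p (pt x y) := dist_le_hR p (pt x y) (by rw [pt0]; exact h1.trans hx)
          · rw [norm_sub_eq_dist]
            refine le_max_of_le_left ?_
            calc dist (pt (q 0) y) q = |y - q 1| := dist_pt_self q y
              _ = |(pt x y) 1 - q 1| := by rw [pt1]
              _ ≤ hL q (pt x y) := abs_le_hL q (pt x y)
  · rcases le_or_gt x (p 0) with h2 | h2
    · calc delta p q y ≤ max ‖pt x y - p‖ ‖pt x y - q‖ := delta_le p q y x
        _ ≤ max (hL q (pt x y)) (hR p (pt x y)) := by
            rw [norm_sub_eq_dist, norm_sub_eq_dist]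
            apply max_le
            · exact le_max_of_le_right (dist_le_hR p (pt x y) (by rw [pt0]; exact h2))
            · exact le_max_of_le_left (dist_le_hL q (pt x y) (by rw [pt0]; exact h1.le))
    · calc delta p q y ≤ max ‖pt (p 0) y - p‖ ‖pt (p 0) y - q‖ := delta_le p q y (p 0)
        _ ≤ max (hL q (pt x y)) (hR p (pt x y)) := by
            apply max_le
            · rw [norm_sub_eq_dist]
              refine le_max_of_le_right ?_
              calc dist (pt (p 0) y) p = |y - p 1| := dist_pt_self p y
                _ = |(pt x y) 1 - p 1| := by rw [pt1]
                _ ≤ hR p (pt x y) := abs_le_hR p (pt x y)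
            · rw [norm_sub_eq_dist]
              refine le_max_of_le_left ?_
              calc dist (pt (p 0) y) q ≤ dist (pt x y) q :=
                    dist_pt_anti x (p 0) y q hx h2.le
                _ ≤ hL q (pt x y) := dist_le_hL q (pt x y) (by rw [pt0]; exact (hx.trans h2.le))

lemma delta_self (q : Pt) (y : ℝ) : delta q q y = |y - q 1| := by
  refine le_antisymm ?_ ?_
  · calc delta q q y ≤ max ‖pt (q 0) y - q‖ ‖pt (q 0) y - q‖ := delta_le q q y (q 0)
      _ = |y - q 1| := by rw [max_self, norm_sub_eq_dist, dist_pt_self]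
  · apply le_ciInf
    intro x
    refine le_max_of_le_left ?_
    rw [norm_sub_eq_dist]
    calc |y - q 1| = |(pt x y) 1 - q 1| := by rw [pt1]
      _ ≤ dist (pt x y) q := abs_le_dist1 _ _

lemma delta'_le_of_forward (p q : Pt) (y : ℝ) (hx : p 0 ≤ q 0) :
    delta' p q y ≤ max (delta p p y) (delta q q y) := by
  calc delta' p q y ≤ max (hL q (pt (p 0) y)) (hR p (pt (p 0) y)) := delta'_le p q y (p 0)
    _ ≤ max (delta p p y) (delta q q y) := by
        rw [delta_self, delta_self]
        apply max_le
        · refine le_max_of_le_right ?_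
          calc hL q (pt (p 0) y) ≤ |(pt (p 0) y) 1 - q 1| := hL_le_abs q _ (by rw [pt0]; exact hx)
            _ = |y - q 1| := by rw [pt1]
        · refine le_max_of_le_left ?_
          calc hR p (pt (p 0) y) ≤ |(pt (p 0) y) 1 - p 1| := hR_le_abs p _ (by rw [pt0])
            _ = |y - p 1| := by rw [pt1]

theorem stmt_8 (n : ℕ) (hn : 1 ≤ n) (p : Fin n → Pt) (y : ℝ) :
    (Finset.univ.filter
        (fun ij : Fin n × Fin n => ij.1 ≤ ij.2 ∧ (p ij.2) 0 ≤ (p ij.1) 0)).sup'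
      ⟨(⟨0, hn⟩, ⟨0, hn⟩), by simp⟩
      (fun ij => delta (p ij.1) (p ij.2) y)
    =
    (Finset.univ.filter (fun ij : Fin n × Fin n => ij.1 ≤ ij.2)).sup'
      ⟨(⟨0, hn⟩, ⟨0, hn⟩), by simp⟩
      (fun ij => delta' (p ij.1) (p ij.2) y) := by
  apply le_antisymm
  · apply Finset.sup'_le
    intro ij hij
    simp only [Finset.mem_filter, Finset.mem_univ, true_and] at hij
    obtain ⟨hle, hx⟩ := hij
    rw [delta_eq_delta'_of_backward _ _ _ hx]
    exact Finset.le_sup' (fun ij : Fin n × Fin n => delta' (p ij.1) (p ij.2) y)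
      (Finset.mem_filter.mpr ⟨Finset.mem_univ _, hle⟩)
  · apply Finset.sup'_le
    intro ij hij
    simp only [Finset.mem_filter, Finset.mem_univ, true_and] at hij
    rcases le_or_gt (p ij.2 0) (p ij.1 0) with hx | hx
    · calc delta' (p ij.1) (p ij.2) y ≤ delta (p ij.1) (p ij.2) y := delta'_le_delta _ _ _
        _ ≤ _ := Finset.le_sup' (fun ij : Fin n × Fin n => delta (p ij.1) (p ij.2) y)
            (Finset.mem_filter.mpr ⟨Finset.mem_univ _, hij, hx⟩)
    · calc delta' (p ij.1) (p ij.2) y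
          ≤ max (delta (p ij.1) (p ij.1) y) (delta (p ij.2) (p ij.2) y) :=
            delta'_le_of_forward _ _ _ hx.le
        _ ≤ _ := by
            apply max_le
            · exact Finset.le_sup' (f := fun ij : Fin n × Fin n => delta (p ij.1) (p ij.2) y)
                (b := (ij.1, ij.1)) (Finset.mem_filter.mpr ⟨Finset.mem_univ _, le_refl _, le_refl _⟩)
            · exact Finset.le_sup' (f := fun ij : Fin n × Fin n => delta (p ij.1) (p ij.2) y)
                (b := (ij.2, ij.2)) (Finset.mem_filter.mpr ⟨Finset.mem_univ _, le_refl _, le_refl _⟩)
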